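/- Let A be a commutative ring and let d : A → A be a derivation (an additive map satisfying the Leibniz rule d(ab) = a(db) + (da)b) such that d ∘ d = 0. Suppose there exists m ∈ A such that d m is a unit. Then: (1) any w ∈ A with w · (d m) = 1 satisfies d w = 0; and (2) every a ∈ A with d a = 0 lies in the image of d, i.e., there exists b ∈ A with d b = a. In other words, the complex (A, d) is acyclic. -/
import Mathlib

/-- Let `A` be a commutative ring and `d : A → A` a derivation (additive and
satisfying the Leibniz rule) with `d ∘ d = 0`.  If `d m` is a unit for some
`m ∈ A`, then (1) any `w` with `w * d m = 1` satisfies `d w = 0`, and (2) every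
`a` with `d a = 0` is of the form `a = d b`; i.e. the complex `(A, d)` is acyclic. -/
theorem acyclic_of_unit_differential (A : Type*) [CommRing A] (d : A → A)
    (hadd : ∀ a b : A, d (a + b) = d a + d b)
    (hleibniz : ∀ a b : A, d (a * b) = a * d b + d a * b)
    (hd2 : ∀ a : A, d (d a) = 0)
    (m : A) (hm : IsUnit (d m)) :
    (∀ w : A, w * d m = 1 → d w = 0) ∧
    (∀ a : A, d a = 0 → ∃ b : A, d b = a) := by
  have h1 : d 1 = 0 := by
    have h := hleibniz 1 1
    simp only [mul_one, one_mul] at h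
    linear_combination -h
  have key : ∀ w : A, w * d m = 1 → d w = 0 := by
    intro w hw
    have h0 : d (w * d m) = 0 := by rw [hw, h1]
    rw [hleibniz, hd2] at h0
    have : d w * d m = 0 := by linear_combination h0
    calc d w = d w * (d m * w) := by rw [mul_comm (d m) w, hw, mul_one]
      _ = (d w * d m) * w := by ring
      _ = 0 := by rw [this, zero_mul]
  refine ⟨key, ?_⟩
  intro a ha
  obtain ⟨u, hu⟩ := hm
  have hw : (↑u⁻¹ : A) * d m = 1 := by rw [← hu]; exact u.inv_mul
  have hdw := key _ hw
  refine ⟨a * (↑u⁻¹ * m), ?_⟩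
  rw [hleibniz, hleibniz, hdw, ha, hw]
  ring
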